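/- There exist constants C₁, C₂ > 0 such that for every finite subset S of SL(2,ℤ) generating a subgroup that is not virtually solvable, and every g ∈ SL(2,ℝ), one has sup_{s ∈ S} ‖g s g⁻¹‖ ≥ C₁ · (inf_{γ ∈ SL(2,ℤ)} ‖gγ‖)^{C₂}. -/

import Mathlib

set_option maxHeartbeats 1000000


open scoped Pointwise
/-- `a` and `b` freely generate a free subgroup of rank 2: the homomorphism from the free
group on two generators sending the generators to `a` and `b` is injective. -/
def FreelyGenerate {G : Type*} [Group G] (a b : G) : Prop :=
  Function.Injective (FreeGroup.lift (fun x : Bool => if x then a else b) : FreeGroup Bool →* G)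

/-- A group is virtually solvable if it has a solvable subgroup of finite index. -/
def IsVirtuallySolvable (G : Type*) [Group G] : Prop :=
  ∃ H : Subgroup G, H.FiniteIndex ∧ IsSolvable H
noncomputable section

/-- Operator norm of a `2×2` real matrix induced by the Euclidean norm on `ℝ²`. -/
def opNorm (A : Matrix (Fin 2) (Fin 2) ℝ) : ℝ :=
  ‖LinearMap.toContinuousLinearMap (Matrix.toEuclideanLin A)‖

/-- The norm `‖Q‖ = sup_{g ∈ Q} ‖g‖` of a set of matrices. -/
def setNorm (Q : Set (Matrix (Fin 2) (Fin 2) ℝ)) : ℝ :=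
  sSup (opNorm '' Q)

/-- `lam` is a (complex) eigenvalue of the real matrix `A`. -/
def IsEigenvalue (A : Matrix (Fin 2) (Fin 2) ℝ) (lam : ℂ) : Prop :=
  ∃ v : Fin 2 → ℂ, v ≠ 0 ∧ (A.map (Complex.ofReal)).mulVec v = lam • v

/-- `Λ(Q)`: the maximal modulus of an eigenvalue of an element of `Q`. -/
def matLambda (Q : Set (Matrix (Fin 2) (Fin 2) ℝ)) : ℝ :=
  sSup {x : ℝ | ∃ q ∈ Q, ∃ lam : ℂ, IsEigenvalue q lam ∧ x = ‖lam‖}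

/-- `E(Q)`: the minimal norm of `Q` over all conjugations by elements of `GL(2,ℝ)`. -/
def minNorm (Q : Set (Matrix (Fin 2) (Fin 2) ℝ)) : ℝ :=
  ⨅ g : GL (Fin 2) ℝ, setNorm ((fun s => (g : Matrix (Fin 2) (Fin 2) ℝ) * s * ((g⁻¹ : GL (Fin 2) ℝ) : Matrix (Fin 2) (Fin 2) ℝ)) '' Q)

/-- The canonical embedding of `SL(2,ℤ)` into the `2×2` real matrices. -/
def toReal (g : Matrix.SpecialLinearGroup (Fin 2) ℤ) : Matrix (Fin 2) (Fin 2) ℝ :=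
  (g : Matrix (Fin 2) (Fin 2) ℤ).map (Int.cast : ℤ → ℝ)

/-- The cross product (determinant) of two vectors of `ℝ²`. -/
def cross (u v : Fin 2 → ℝ) : ℝ := u 0 * v 1 - u 1 * v 0

/-- The Euclidean norm on `ℝ²`. -/
def enorm2 (u : Fin 2 → ℝ) : ℝ := Real.sqrt (u 0 ^ 2 + u 1 ^ 2)

/-- Fubini–Study distance between the lines spanned by `u` and `v`. -/
def pdist (u v : Fin 2 → ℝ) : ℝ := |cross u v| / (enorm2 u * enorm2 v)

/-! ### Auxiliary material -/

namespace ArithNormAux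

open Matrix

abbrev SL2Z := Matrix.SpecialLinearGroup (Fin 2) ℤ
abbrev E2 := EuclideanSpace ℝ (Fin 2)

def ev (u : Fin 2 → ℝ) : E2 := (WithLp.equiv 2 (Fin 2 → ℝ)).symm u
def castVec (p : Fin 2 → ℤ) : Fin 2 → ℝ := fun i => (p i : ℝ)
def dotR (u v : Fin 2 → ℝ) : ℝ := u 0 * v 0 + u 1 * v 1

lemma ev_norm (u : Fin 2 → ℝ) : ‖ev u‖ = Real.sqrt (u 0 ^ 2 + u 1 ^ 2) := by
  rw [EuclideanSpace.norm_eq]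
  simp [ev, Fin.sum_univ_two, sq_abs]

lemma ev_norm_sq (u : Fin 2 → ℝ) : ‖ev u‖ ^ 2 = u 0 ^ 2 + u 1 ^ 2 := by
  rw [ev_norm, Real.sq_sqrt (by positivity)]

lemma ev_add (u v : Fin 2 → ℝ) : ev (u + v) = ev u + ev v := rfl
lemma ev_smul (c : ℝ) (u : Fin 2 → ℝ) : ev (c • u) = c • ev u := rfl

lemma ev_norm_pos {u : Fin 2 → ℝ} (hu : u ≠ 0) : 0 < ‖ev u‖ := by
  rw [ev_norm]
  have : u 0 ≠ 0 ∨ u 1 ≠ 0 := by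
    by_contra h
    push_neg at h
    exact hu (funext fun i => by fin_cases i <;> simp [h.1, h.2])
  apply Real.sqrt_pos.mpr
  rcases this with h | h
  · have : 0 < u 0 ^ 2 := by positivity
    nlinarith [sq_nonneg (u 1)]
  · have : 0 < u 1 ^ 2 := by positivity
    nlinarith [sq_nonneg (u 0)]

lemma abs_coord_le (u : Fin 2 → ℝ) (i : Fin 2) : |u i| ≤ ‖ev u‖ := by
  have key : ∀ j : Fin 2, u j ^ 2 ≤ u 0 ^ 2 + u 1 ^ 2 → |u j| ≤ ‖ev u‖ := by
    intro j hj
    rw [ev_norm, ← Real.sqrt_sq_eq_abs]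
    exact Real.sqrt_le_sqrt hj
  fin_cases i
  · exact key 0 (by nlinarith [sq_nonneg (u 1)])
  · exact key 1 (by nlinarith [sq_nonneg (u 0)])

lemma abs_cross_le (u v : Fin 2 → ℝ) : |cross u v| ≤ ‖ev u‖ * ‖ev v‖ := by
  have h1 : |cross u v| = Real.sqrt (cross u v ^ 2) := (Real.sqrt_sq_eq_abs _).symm
  rw [h1, ev_norm, ev_norm, ← Real.sqrt_mul (by positivity)]
  apply Real.sqrt_le_sqrt
  unfold cross
  nlinarith [sq_nonneg (u 0 * v 0 + u 1 * v 1)]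

lemma cross_mulVec (A : Matrix (Fin 2) (Fin 2) ℝ) (p q : Fin 2 → ℝ) :
    cross (A.mulVec p) (A.mulVec q) = A.det * cross p q := by
  simp only [cross, Matrix.mulVec, dotProduct, Fin.sum_univ_two, Matrix.det_fin_two]
  ring

lemma lagrange (v x : Fin 2 → ℝ) :
    (v 0 ^ 2 + v 1 ^ 2) * (x 0 ^ 2 + x 1 ^ 2) = dotR v x ^ 2 + cross v x ^ 2 := by
  unfold dotR cross; ring

lemma castVec_ne_zero {p : Fin 2 → ℤ} (hp : p ≠ 0) : castVec p ≠ 0 := by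
  intro h
  apply hp
  funext i
  have := congrFun h i
  simpa [castVec] using this

lemma castVec_mulVec (M : Matrix (Fin 2) (Fin 2) ℤ) (p : Fin 2 → ℤ) :
    (M.map (Int.cast : ℤ → ℝ)).mulVec (castVec p) = castVec (M.mulVec p) := by
  funext i
  simp [Matrix.mulVec, dotProduct, Fin.sum_univ_two, castVec]

lemma castVec_cross (p q : Fin 2 → ℤ) :
    cross (castVec p) (castVec q) = ((p 0 * q 1 - p 1 * q 0 : ℤ) : ℝ) := by
  simp [cross, castVec]

lemma castVec_smul (k : ℤ) (p : Fin 2 → ℤ) :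
    castVec (k • p) = (k : ℝ) • castVec p := by
  funext i; simp [castVec]

lemma castVec_add (p q : Fin 2 → ℤ) : castVec (p + q) = castVec p + castVec q := by
  funext i; simp [castVec]

lemma opNorm_nonneg (A : Matrix (Fin 2) (Fin 2) ℝ) : 0 ≤ opNorm A := norm_nonneg _

lemma mulVec_norm_le (A : Matrix (Fin 2) (Fin 2) ℝ) (u : Fin 2 → ℝ) :
    ‖ev (A.mulVec u)‖ ≤ opNorm A * ‖ev u‖ := by
  have := (LinearMap.toContinuousLinearMap (Matrix.toEuclideanLin A)).le_opNorm (ev u)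
  simpa [ev, opNorm] using this

lemma opNorm_le (A : Matrix (Fin 2) (Fin 2) ℝ) {C : ℝ} (hC : 0 ≤ C)
    (h : ∀ u : Fin 2 → ℝ, ‖ev (A.mulVec u)‖ ≤ C * ‖ev u‖) : opNorm A ≤ C := by
  apply ContinuousLinearMap.opNorm_le_bound _ hC
  intro x
  simpa [ev, Matrix.toEuclideanLin_apply] using h ((WithLp.equiv 2 (Fin 2 → ℝ)) x)

lemma exists_smul_of_cross_eq_zero {p q : Fin 2 → ℝ} (hp : p ≠ 0) (h : cross p q = 0) :
    ∃ c : ℝ, q = c • p := by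
  have hcases : p 0 ≠ 0 ∨ p 1 ≠ 0 := by
    by_contra hc
    push_neg at hc
    exact hp (funext fun i => by fin_cases i <;> simp [hc.1, hc.2])
  unfold cross at h
  rcases hcases with h0 | h1
  · refine ⟨q 0 / p 0, funext fun i => ?_⟩
    have e0 : q 0 = (q 0 / p 0) * p 0 := by field_simp
    have e1 : q 1 = (q 0 / p 0) * p 1 := by field_simp; linarith
    fin_cases i
    · exact e0
    · exact e1
  · refine ⟨q 1 / p 1, funext fun i => ?_⟩
    have e0 : q 0 = (q 1 / p 1) * p 0 := by field_simp; linarith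
    have e1 : q 1 = (q 1 / p 1) * p 1 := by field_simp
    fin_cases i
    · exact e0
    · exact e1

lemma opNorm_le_cols (A : Matrix (Fin 2) (Fin 2) ℝ) :
    opNorm A ≤ ‖ev (A.mulVec ![1,0])‖ + ‖ev (A.mulVec ![0,1])‖ := by
  apply opNorm_le _ (by positivity)
  intro y
  have hy : A.mulVec y = y 0 • A.mulVec ![1,0] + y 1 • A.mulVec ![0,1] := by
    funext i
    fin_cases i <;> simp [Matrix.mulVec, dotProduct, Fin.sum_univ_two] <;> ring
  rw [hy, ev_add, ev_smul, ev_smul]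
  have h1 := abs_coord_le y 0
  have h2 := abs_coord_le y 1
  have n0 : (0:ℝ) ≤ ‖ev (A.mulVec ![1,0])‖ := norm_nonneg _
  have n1 : (0:ℝ) ≤ ‖ev (A.mulVec ![0,1])‖ := norm_nonneg _
  calc ‖y 0 • ev (A.mulVec ![1,0]) + y 1 • ev (A.mulVec ![0,1])‖
      ≤ ‖y 0 • ev (A.mulVec ![1,0])‖ + ‖y 1 • ev (A.mulVec ![0,1])‖ := norm_add_le _ _
    _ = |y 0| * ‖ev (A.mulVec ![1,0])‖ + |y 1| * ‖ev (A.mulVec ![0,1])‖ := by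
        rw [norm_smul, norm_smul]; simp [Real.norm_eq_abs]
    _ ≤ (‖ev (A.mulVec ![1,0])‖ + ‖ev (A.mulVec ![0,1])‖) * ‖ev y‖ := by
        have hy0 : (0:ℝ) ≤ ‖ev y‖ := norm_nonneg _
        nlinarith [abs_nonneg (y 0), abs_nonneg (y 1)]

lemma exists_min_vec (G Ginv : Matrix (Fin 2) (Fin 2) ℝ) (hGinv : Ginv * G = 1) :
    ∃ u : Fin 2 → ℤ, u ≠ 0 ∧ ∀ p : Fin 2 → ℤ, p ≠ 0 →
      ‖ev (G.mulVec (castVec u))‖ ≤ ‖ev (G.mulVec (castVec p))‖ := by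
  set N : (Fin 2 → ℤ) → ℝ := fun p => ‖ev (G.mulVec (castVec p))‖ with hN
  have key : ∀ p : Fin 2 → ℤ, ‖ev (castVec p)‖ ≤ opNorm Ginv * N p := by
    intro p
    have : castVec p = Ginv.mulVec (G.mulVec (castVec p)) := by
      rw [Matrix.mulVec_mulVec, hGinv, Matrix.one_mulVec]
    calc ‖ev (castVec p)‖ = ‖ev (Ginv.mulVec (G.mulVec (castVec p)))‖ := by rw [← this]
      _ ≤ opNorm Ginv * N p := mulVec_norm_le _ _
  set e₀ : Fin 2 → ℤ := ![1, 0] with he₀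
  have he₀ne : e₀ ≠ 0 := by
    intro h
    have := congrFun h 0
    simp [he₀] at this
  set R : ℝ := opNorm Ginv * N e₀ with hR
  set B : Set (Fin 2 → ℤ) := {p | p ≠ 0 ∧ N p ≤ N e₀} with hB
  have hsub : B ⊆ Set.pi Set.univ (fun _ : Fin 2 => Set.Icc (-⌈R⌉) ⌈R⌉) := by
    rintro p ⟨hp0, hpN⟩ i _
    have h1 : |(p i : ℝ)| ≤ ‖ev (castVec p)‖ := abs_coord_le (castVec p) i
    have h2 : ‖ev (castVec p)‖ ≤ R := by
      refine le_trans (key p) ?_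
      rw [hR]
      exact mul_le_mul_of_nonneg_left hpN (opNorm_nonneg Ginv)
    have h3 : (|p i| : ℝ) ≤ (⌈R⌉ : ℝ) := by
      exact le_trans (le_trans h1 h2) (Int.le_ceil R)
    have h4 : |p i| ≤ ⌈R⌉ := by exact_mod_cast h3
    exact abs_le.mp h4
  have hBfin : B.Finite :=
    Set.Finite.subset (Set.Finite.pi (fun _ => Set.finite_Icc _ _)) hsub
  have hBne : B.Nonempty := ⟨e₀, he₀ne, le_refl _⟩
  obtain ⟨u, huB, humin⟩ := Set.exists_min_image B N hBfin hBne
  refine ⟨u, huB.1, fun p hp => ?_⟩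
  by_cases hcase : N p ≤ N e₀
  · exact humin p ⟨hp, hcase⟩
  · exact le_trans (humin e₀ ⟨he₀ne, le_refl _⟩) (le_of_not_ge hcase)

lemma comm_of_fix (u : Fin 2 → ℝ) (hu : u ≠ 0) (A B : Matrix (Fin 2) (Fin 2) ℝ)
    (hA : A.det = 1) (hB : B.det = 1) (hAu : A.mulVec u = u) (hBu : B.mulVec u = u) :
    A * B = B * A := by
  obtain ⟨a, b, c, d, rfl⟩ : ∃ a b c d, A = !![a, b; c, d] := ⟨_, _, _, _, Matrix.eta_fin_two A⟩
  obtain ⟨e, f, g, h, rfl⟩ : ∃ a b c d, B = !![a, b; c, d] := ⟨_, _, _, _, Matrix.eta_fin_two B⟩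
  set u0 := u 0 with hu0def; set u1 := u 1 with hu1def
  have h1 : a * u0 + b * u1 = u0 := by
    simpa [Matrix.mulVec, dotProduct, Fin.sum_univ_two] using congrFun hAu 0
  have h2 : c * u0 + d * u1 = u1 := by
    simpa [Matrix.mulVec, dotProduct, Fin.sum_univ_two] using congrFun hAu 1
  have h3 : a * d - b * c = 1 := by rw [Matrix.det_fin_two] at hA; simpa using hA
  have k1 : e * u0 + f * u1 = u0 := by
    simpa [Matrix.mulVec, dotProduct, Fin.sum_univ_two] using congrFun hBu 0
  have k2 : g * u0 + h * u1 = u1 := by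
    simpa [Matrix.mulVec, dotProduct, Fin.sum_univ_two] using congrFun hBu 1
  have k3 : e * h - f * g = 1 := by rw [Matrix.det_fin_two] at hB; simpa using hB
  have hcomm : b * g = f * c ∧ (a * f + b * h = e * b + f * d) ∧
      (c * e + d * g = g * a + h * c) := by
    rcases eq_or_ne u1 0 with hu1 | hu1
    · have hu0 : u0 ≠ 0 := fun h0 => hu (funext fun i => by
        fin_cases i
        · exact h0
        · exact hu1)
      rw [hu1] at h1 h2 k1 k2
      have ha : a = 1 := mul_right_cancel₀ hu0 (by linarith : a * u0 = 1 * u0)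
      have hc : c = 0 := by
        have : c * u0 = 0 * u0 := by linarith
        exact mul_right_cancel₀ hu0 this
      have hd : d = 1 := by rw [ha, hc] at h3; linarith
      have he : e = 1 := mul_right_cancel₀ hu0 (by linarith : e * u0 = 1 * u0)
      have hg : g = 0 := by
        have : g * u0 = 0 * u0 := by linarith
        exact mul_right_cancel₀ hu0 this
      have hh : h = 1 := by rw [he, hg] at k3; linarith
      subst ha hc hd he hg hh
      refine ⟨by ring, by ring, by ring⟩
    · have ha' : a * u1 = u1 + c * u0 := by linear_combination u1 * h3 - a * h2 + c * h1
      have hb' : b * u1 ^ 2 = -(c * u0 ^ 2) := by linear_combination u1 * h1 - u0 * ha'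
      have hd' : d * u1 = u1 - c * u0 := by linear_combination h2
      have he' : e * u1 = u1 + g * u0 := by linear_combination u1 * k3 - e * k2 + g * k1
      have hf' : f * u1 ^ 2 = -(g * u0 ^ 2) := by linear_combination u1 * k1 - u0 * he'
      have hh' : h * u1 = u1 - g * u0 := by linear_combination k2
      have ha : a = (u1 + c * u0) / u1 := by rw [eq_div_iff hu1]; linear_combination ha'
      have hb : b = -(c * u0 ^ 2) / u1 ^ 2 := by
        rw [eq_div_iff (pow_ne_zero 2 hu1)]; linear_combination hb'
      have hd : d = (u1 - c * u0) / u1 := by rw [eq_div_iff hu1]; linear_combination hd'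
      have he : e = (u1 + g * u0) / u1 := by rw [eq_div_iff hu1]; linear_combination he'
      have hf : f = -(g * u0 ^ 2) / u1 ^ 2 := by
        rw [eq_div_iff (pow_ne_zero 2 hu1)]; linear_combination hf'
      have hh : h = (u1 - g * u0) / u1 := by rw [eq_div_iff hu1]; linear_combination hh'
      subst ha hb hd he hf hh
      refine ⟨by field_simp, by field_simp; ring, by field_simp; ring⟩
  obtain ⟨q1, q2, q3⟩ := hcomm
  ext i j
  fin_cases i <;> fin_cases j <;>
    simp [Matrix.mul_apply, Fin.sum_univ_two] <;> linarith

def Mof (s : SL2Z) : Matrix (Fin 2) (Fin 2) ℝ :=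
  ((Matrix.SpecialLinearGroup.map (Int.castRingHom ℝ) s : Matrix.SpecialLinearGroup (Fin 2) ℝ) :
    Matrix (Fin 2) (Fin 2) ℝ)

lemma Mof_mul (s t : SL2Z) : Mof (s * t) = Mof s * Mof t := by
  simp [Mof, _root_.map_mul, Matrix.SpecialLinearGroup.coe_mul]

lemma Mof_one : Mof 1 = 1 := by simp [Mof]

lemma Mof_det (s : SL2Z) : (Mof s).det = 1 :=
  (Matrix.SpecialLinearGroup.map (Int.castRingHom ℝ) s).prop

lemma Mof_coe (s : SL2Z) : Mof s = (s : Matrix (Fin 2) (Fin 2) ℤ).map (Int.cast : ℤ → ℝ) := by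
  rfl

lemma Mof_injective : Function.Injective Mof := by
  intro s t h
  apply Subtype.ext
  rw [Mof_coe, Mof_coe] at h
  exact Matrix.map_injective Int.cast_injective h

lemma stab_solvable (uR : Fin 2 → ℝ) (hu : uR ≠ 0) (S : Set SL2Z)
    (hS : ∀ s ∈ S, ∃ c : ℝ, (Mof s).mulVec uR = c • uR) :
    IsSolvable (Subgroup.closure S) := by
  obtain ⟨i₀, hi₀⟩ := Function.ne_iff.mp hu
  have huniq : ∀ x y : ℝ, x • uR = y • uR → x = y := by
    intro x y hxy
    have := congrFun hxy i₀
    simp only [Pi.smul_apply, smul_eq_mul] at this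
    exact mul_right_cancel₀ hi₀ this
  set H : Subgroup SL2Z :=
    { carrier := {s | ∃ c : ℝ, (Mof s).mulVec uR = c • uR}
      one_mem' := ⟨1, by simp [Mof_one]⟩
      mul_mem' := by
        rintro a b ⟨x, hx⟩ ⟨y, hy⟩
        exact ⟨x * y, by
          rw [Mof_mul, ← Matrix.mulVec_mulVec, hy, Matrix.mulVec_smul, hx, smul_smul,
            mul_comm]⟩
      inv_mem' := by
        rintro s ⟨x, hx⟩
        have hsx : (Mof s⁻¹).mulVec ((Mof s).mulVec uR) = uR := by
          rw [Matrix.mulVec_mulVec, ← Mof_mul, inv_mul_cancel, Mof_one, Matrix.one_mulVec]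
        have hx0 : x ≠ 0 := by
          rintro rfl
          rw [hx, zero_smul, Matrix.mulVec_zero] at hsx
          exact hu hsx.symm
        refine ⟨x⁻¹, ?_⟩
        rw [hx, Matrix.mulVec_smul] at hsx
        calc (Mof s⁻¹).mulVec uR = (x⁻¹ * x) • (Mof s⁻¹).mulVec uR := by
              rw [inv_mul_cancel₀ hx0, one_smul]
          _ = x⁻¹ • uR := by rw [mul_smul, hsx] } with hHdef
  have hcval : ∀ s : H, ∃ c : ℝ, (Mof s.1).mulVec uR = c • uR := fun s => s.2
  set cval : H → ℝ := fun s => Classical.choose (hcval s) with hcvaldef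
  have hspec : ∀ s : H, (Mof s.1).mulVec uR = cval s • uR := fun s =>
    Classical.choose_spec (hcval s)
  have hcne : ∀ s : H, cval s ≠ 0 := by
    intro s h0
    have hsx : (Mof s.1⁻¹).mulVec ((Mof s.1).mulVec uR) = uR := by
      rw [Matrix.mulVec_mulVec, ← Mof_mul, inv_mul_cancel, Mof_one, Matrix.one_mulVec]
    rw [hspec s, h0, zero_smul, Matrix.mulVec_zero] at hsx
    exact hu hsx.symm
  have hcmul : ∀ a b : H, cval (a * b) = cval a * cval b := by
    intro a b
    apply huniq
    rw [← hspec (a * b)]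
    show (Mof (a.1 * b.1)).mulVec uR = _
    rw [Mof_mul, ← Matrix.mulVec_mulVec, hspec b, Matrix.mulVec_smul, hspec a, smul_smul,
      mul_comm]
  set χ : H →* ℝˣ := MonoidHom.mk' (fun s => Units.mk0 (cval s) (hcne s))
    (fun a b => Units.ext (by simp [hcmul a b])) with hχdef
  have hkerfix : ∀ x : χ.ker, (Mof x.1.1).mulVec uR = uR := by
    intro x
    have h1 : cval x.1 = 1 := by
      have := x.2
      rw [MonoidHom.mem_ker] at this
      have := congrArg Units.val this
      simpa [hχdef] using this
    rw [hspec x.1, h1, one_smul]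
  have hker_comm : ∀ x y : χ.ker, x * y = y * x := by
    intro x y
    have hmat : Mof x.1.1 * Mof y.1.1 = Mof y.1.1 * Mof x.1.1 :=
      comm_of_fix uR hu _ _ (Mof_det _) (Mof_det _) (hkerfix x) (hkerfix y)
    rw [← Mof_mul, ← Mof_mul] at hmat
    have : x.1.1 * y.1.1 = y.1.1 * x.1.1 := Mof_injective hmat
    exact Subtype.ext (Subtype.ext this)
  haveI : Group.IsSolvable χ.ker := isSolvable_of_comm hker_comm
  haveI : Group.IsSolvable H := solvable_of_ker_le_range χ.ker.subtype χ
    (le_of_eq (Subgroup.range_subtype χ.ker).symm)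
  have hle : Subgroup.closure S ≤ H := (Subgroup.closure_le H).mpr hS
  exact solvable_of_solvable_injective (Subgroup.inclusion_injective hle)

end ArithNormAux

open ArithNormAux Matrix

/-- For every finite subset `S ⊂ SL(2,ℤ)` generating a non-virtually solvable subgroup and
every `g ∈ SL(2,ℝ)`, `sup_{s ∈ S} ‖g s g⁻¹‖ ≥ C₁ (inf_{γ ∈ SL(2,ℤ)} ‖gγ‖)^{C₂}` for
absolute constants `C₁, C₂ > 0`. -/
theorem arithmetic_norm_lower_bound :
    ∃ C₁ C₂ : ℝ, 0 < C₁ ∧ 0 < C₂ ∧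
      ∀ S : Set (Matrix.SpecialLinearGroup (Fin 2) ℤ), S.Finite →
        ¬ IsVirtuallySolvable (Subgroup.closure S) →
        ∀ g : Matrix.SpecialLinearGroup (Fin 2) ℝ,
          C₁ * (⨅ γ : Matrix.SpecialLinearGroup (Fin 2) ℤ,
                  opNorm ((g * Matrix.SpecialLinearGroup.map (Int.castRingHom ℝ) γ :
                    Matrix.SpecialLinearGroup (Fin 2) ℝ) : Matrix (Fin 2) (Fin 2) ℝ)) ^ C₂ ≤
            sSup {x : ℝ | ∃ s ∈ S,
              x = opNorm ((g * Matrix.SpecialLinearGroup.map (Int.castRingHom ℝ) s * g⁻¹ :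
                Matrix.SpecialLinearGroup (Fin 2) ℝ) : Matrix (Fin 2) (Fin 2) ℝ)} := by
  refine ⟨1/9, 2, by norm_num, by norm_num, ?_⟩
  intro S hSfin hns g
  set G : Matrix (Fin 2) (Fin 2) ℝ := (g : Matrix (Fin 2) (Fin 2) ℝ) with hGdef
  set Ginv : Matrix (Fin 2) (Fin 2) ℝ := ((g⁻¹ : Matrix.SpecialLinearGroup (Fin 2) ℝ) :
    Matrix (Fin 2) (Fin 2) ℝ) with hGinvdef
  have hGinvG : Ginv * G = 1 := by
    rw [hGinvdef, hGdef, ← Matrix.SpecialLinearGroup.coe_mul, inv_mul_cancel,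
      Matrix.SpecialLinearGroup.coe_one]
  have hGdet : G.det = 1 := g.prop
  -- the minimal vector
  obtain ⟨u, hu0, humin⟩ := exists_min_vec G Ginv hGinvG
  set uR : Fin 2 → ℝ := castVec u with huRdef
  have huR : uR ≠ 0 := castVec_ne_zero hu0
  have hGne : ∀ p : Fin 2 → ℝ, p ≠ 0 → G.mulVec p ≠ 0 := by
    intro p hp h0
    apply hp
    have : p = Ginv.mulVec (G.mulVec p) := by
      rw [Matrix.mulVec_mulVec, hGinvG, Matrix.one_mulVec]
    rw [this, h0, Matrix.mulVec_zero]
  set v : Fin 2 → ℝ := G.mulVec uR with hvdef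
  set α : ℝ := ‖ev v‖ with hαdef
  have hα : 0 < α := ev_norm_pos (hGne uR huR)
  have hαvv : dotR v v = α ^ 2 := by
    rw [hαdef, ev_norm_sq]; unfold dotR; ring
  -- gcd of u is 1
  have hgcd : Int.gcd (u 0) (u 1) = 1 := by
    set d : ℕ := Int.gcd (u 0) (u 1) with hd
    have hune : u 0 ≠ 0 ∨ u 1 ≠ 0 := by
      by_contra hc
      push_neg at hc
      exact hu0 (funext fun i => by fin_cases i <;> simp [hc.1, hc.2])
    have hdpos : 0 < d := by
      rcases hune with h | h
      · exact Int.gcd_pos_of_ne_zero_left _ h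
      · exact Int.gcd_pos_of_ne_zero_right _ h
    obtain ⟨k0, hk0⟩ : ((d : ℤ)) ∣ u 0 := Int.gcd_dvd_left (u 0) (u 1)
    obtain ⟨k1, hk1⟩ : ((d : ℤ)) ∣ u 1 := Int.gcd_dvd_right (u 0) (u 1)
    set u' : Fin 2 → ℤ := ![k0, k1] with hu'
    have hu'cast : castVec u = (d : ℝ) • castVec u' := by
      funext i
      fin_cases i <;> simp [castVec, hk0, hk1, hu'] <;> push_cast <;> ring
    have hu'ne : u' ≠ 0 := by
      intro h
      apply hu0
      funext i
      have h0 := congrFun h 0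
      have h1 := congrFun h 1
      simp [hu'] at h0 h1
      fin_cases i <;> simp [hk0, hk1, h0, h1]
    have hNu' : 0 < ‖ev (G.mulVec (castVec u'))‖ :=
      ev_norm_pos (hGne _ (castVec_ne_zero hu'ne))
    have hNu : ‖ev (G.mulVec (castVec u))‖ = (d : ℝ) * ‖ev (G.mulVec (castVec u'))‖ := by
      rw [hu'cast, Matrix.mulVec_smul, ev_smul, norm_smul]
      simp [abs_of_nonneg (by positivity : (0:ℝ) ≤ (d:ℝ))]
    have hmin := humin u' hu'ne
    have hαNu : α = (d : ℝ) * ‖ev (G.mulVec (castVec u'))‖ := hNu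
    have : (d : ℝ) ≤ 1 := by nlinarith [hmin, hNu', hαNu]
    have : d ≤ 1 := by exact_mod_cast this
    omega
  -- Bézout vector w
  set w : Fin 2 → ℤ := ![-(Int.gcdB (u 0) (u 1)), Int.gcdA (u 0) (u 1)] with hw
  have hcrossuw : u 0 * w 1 - u 1 * w 0 = 1 := by
    have := Int.gcd_eq_gcd_ab (u 0) (u 1)
    rw [hgcd] at this
    push_cast at this
    simp [hw]
    linarith [this]
  -- the rounding
  set x : Fin 2 → ℝ := G.mulVec (castVec w) with hxdef
  set t : ℝ := dotR v x / α ^ 2 with ht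
  set k : ℤ := -round t with hk
  set w' : Fin 2 → ℤ := w + k • u with hw'
  have hcrossuw' : u 0 * w' 1 - u 1 * w' 0 = 1 := by
    have e0 : w' 0 = w 0 + k * u 0 := by simp [hw']
    have e1 : w' 1 = w 1 + k * u 1 := by simp [hw']
    rw [e0, e1]; linear_combination hcrossuw
  have hw'ne : w' ≠ 0 := by
    intro h
    rw [h] at hcrossuw'
    simp at hcrossuw'
  set x' : Fin 2 → ℝ := G.mulVec (castVec w') with hx'def
  have hx'e : ∀ i, x' i = x i + (k : ℝ) * v i := by
    intro i
    have : castVec w' = castVec w + (k : ℝ) • uR := by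
      rw [hw', castVec_add, castVec_smul, huRdef]
    rw [hx'def, this, Matrix.mulVec_add, Matrix.mulVec_smul]
    fin_cases i <;> simp [hxdef, hvdef]
  -- cross v x' = 1
  have hcross1 : cross v x' = 1 := by
    rw [hvdef, hx'def, cross_mulVec, hGdet, one_mul, huRdef, castVec_cross, hcrossuw']
    norm_num
  -- dot bound
  have hdotbound : |dotR v x'| ≤ α ^ 2 / 2 := by
    have hexp : dotR v x' = dotR v x + (k : ℝ) * dotR v v := by
      unfold dotR
      rw [hx'e 0, hx'e 1]; ring
    have hdvx : dotR v x = t * α ^ 2 := by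
      rw [ht]; field_simp
    have hkc : (k : ℝ) = -(round t : ℝ) := by rw [hk]; push_cast; ring
    rw [hexp, hdvx, hkc, hαvv]
    have : t * α ^ 2 + -(round t : ℝ) * α ^ 2 = (t - round t) * α ^ 2 := by ring
    rw [this, abs_mul, abs_of_nonneg (by positivity : (0:ℝ) ≤ α ^ 2)]
    have := abs_sub_round t
    nlinarith [sq_nonneg α]
  -- norm of x'
  have hx'sq : ‖ev x'‖ ^ 2 = (dotR v x' ^ 2 + 1) / α ^ 2 := by
    have hl := lagrange v x'
    rw [hcross1] at hl
    have hv2 : v 0 ^ 2 + v 1 ^ 2 = α ^ 2 := by rw [hαdef, ev_norm_sq]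
    have hx2 : x' 0 ^ 2 + x' 1 ^ 2 = ‖ev x'‖ ^ 2 := by rw [ev_norm_sq]
    rw [hv2, hx2] at hl
    rw [eq_div_iff (by positivity : α ^ 2 ≠ 0)]
    nlinarith [hl]
  have hαx' : α ≤ ‖ev x'‖ := humin w' hw'ne
  have hα2le : α ^ 2 ≤ 4 / 3 := by
    have h1 : α ^ 2 ≤ ‖ev x'‖ ^ 2 := by nlinarith
    rw [hx'sq] at h1
    have h2 : α ^ 2 * α ^ 2 ≤ dotR v x' ^ 2 + 1 := by
      rw [le_div_iff₀ (by positivity : (0:ℝ) < α ^ 2)] at h1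
      linarith
    have h3 : dotR v x' ^ 2 ≤ (α ^ 2 / 2) ^ 2 := by
      nlinarith [abs_nonneg (dotR v x'), sq_abs (dotR v x')]
    nlinarith [sq_nonneg (α ^ 2), sq_nonneg (α ^ 2 - 4/3)]
  have hαne : α ≠ 0 := ne_of_gt hα
  have hx'le : ‖ev x'‖ ≤ α / 2 + 1 / α := by
    have h3 : dotR v x' ^ 2 ≤ (α ^ 2 / 2) ^ 2 := by
      nlinarith [abs_nonneg (dotR v x'), sq_abs (dotR v x')]
    have h1 : ‖ev x'‖ ^ 2 ≤ α ^ 2 / 4 + 1 / α ^ 2 := by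
      rw [hx'sq, div_le_iff₀ (by positivity : (0:ℝ) < α ^ 2)]
      have hrhs : (α ^ 2 / 4 + 1 / α ^ 2) * α ^ 2 = α ^ 2 * α ^ 2 / 4 + 1 := by
        field_simp
      rw [hrhs]
      nlinarith [h3]
    have h2 : (0:ℝ) ≤ ‖ev x'‖ := norm_nonneg _
    have hs : (0:ℝ) < α / 2 + 1 / α := by positivity
    have hexp : (α / 2 + 1 / α) ^ 2 = α ^ 2 / 4 + 1 + 1 / α ^ 2 := by
      field_simp; ring
    have hsq : ‖ev x'‖ ^ 2 ≤ (α / 2 + 1 / α) ^ 2 := by rw [hexp]; linarith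
    have := Real.sqrt_le_sqrt hsq
    rwa [Real.sqrt_sq h2, Real.sqrt_sq hs.le] at this
  -- the SL2Z element γ
  set γmat : Matrix (Fin 2) (Fin 2) ℤ := !![u 0, w' 0; u 1, w' 1] with hγmat
  have hγdet : γmat.det = 1 := by
    rw [hγmat, Matrix.det_fin_two_of]
    linarith [hcrossuw']
  set γ : SL2Z := ⟨γmat, hγdet⟩ with hγ
  -- bound on opNorm (g γ)
  have hPcoe : ((g * Matrix.SpecialLinearGroup.map (Int.castRingHom ℝ) γ :
      Matrix.SpecialLinearGroup (Fin 2) ℝ) : Matrix (Fin 2) (Fin 2) ℝ) =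
      G * (γmat.map (Int.cast : ℤ → ℝ)) := by
    rw [Matrix.SpecialLinearGroup.coe_mul]
    rfl
  have hcol0 : (γmat.map (Int.cast : ℤ → ℝ)).mulVec ![1, 0] = castVec u := by
    funext i
    fin_cases i <;>
      simp [hγmat, Matrix.mulVec, dotProduct, Fin.sum_univ_two, castVec]
  have hcol1 : (γmat.map (Int.cast : ℤ → ℝ)).mulVec ![0, 1] = castVec w' := by
    funext i
    fin_cases i <;>
      simp [hγmat, Matrix.mulVec, dotProduct, Fin.sum_univ_two, castVec]
  have hγbound : opNorm ((g * Matrix.SpecialLinearGroup.map (Int.castRingHom ℝ) γ :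
      Matrix.SpecialLinearGroup (Fin 2) ℝ) : Matrix (Fin 2) (Fin 2) ℝ) ≤ 3 / α := by
    rw [hPcoe]
    have hcols := opNorm_le_cols (G * (γmat.map (Int.cast : ℤ → ℝ)))
    have e0 : (G * (γmat.map (Int.cast : ℤ → ℝ))).mulVec ![1, 0] = v := by
      rw [← Matrix.mulVec_mulVec, hcol0]
    have e1 : (G * (γmat.map (Int.cast : ℤ → ℝ))).mulVec ![0, 1] = x' := by
      rw [← Matrix.mulVec_mulVec, hcol1]
    rw [e0, e1] at hcols
    have : α + (α / 2 + 1 / α) ≤ 3 / α := by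
      have hdiff : 3 / α - (α + (α / 2 + 1 / α)) = (2 - 3 / 2 * α ^ 2) / α := by
        field_simp; ring
      have hnum : (0:ℝ) ≤ (2 - 3 / 2 * α ^ 2) / α :=
        div_nonneg (by nlinarith [hα2le]) hα.le
      linarith [hdiff, hnum]
    calc opNorm (G * (γmat.map (Int.cast : ℤ → ℝ))) ≤ ‖ev v‖ + ‖ev x'‖ := hcols
      _ = α + ‖ev x'‖ := by rw [hαdef]
      _ ≤ α + (α / 2 + 1 / α) := by linarith
      _ ≤ 3 / α := this
  -- bound on the infimum
  have hbddbelow : BddBelow (Set.range (fun γ' : SL2Z =>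
      opNorm ((g * Matrix.SpecialLinearGroup.map (Int.castRingHom ℝ) γ' :
        Matrix.SpecialLinearGroup (Fin 2) ℝ) : Matrix (Fin 2) (Fin 2) ℝ))) := by
    refine ⟨0, ?_⟩
    rintro z ⟨γ', rfl⟩
    exact opNorm_nonneg _
  have hDle : (⨅ γ' : SL2Z, opNorm ((g * Matrix.SpecialLinearGroup.map (Int.castRingHom ℝ) γ' :
      Matrix.SpecialLinearGroup (Fin 2) ℝ) : Matrix (Fin 2) (Fin 2) ℝ)) ≤ 3 / α :=
    le_trans (ciInf_le hbddbelow γ) hγbound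
  have hD0 : 0 ≤ (⨅ γ' : SL2Z, opNorm ((g * Matrix.SpecialLinearGroup.map (Int.castRingHom ℝ) γ' :
      Matrix.SpecialLinearGroup (Fin 2) ℝ) : Matrix (Fin 2) (Fin 2) ℝ)) :=
    le_ciInf (fun γ' => opNorm_nonneg _)
  -- the sup set
  set T : Set ℝ := {x : ℝ | ∃ s ∈ S,
      x = opNorm ((g * Matrix.SpecialLinearGroup.map (Int.castRingHom ℝ) s * g⁻¹ :
        Matrix.SpecialLinearGroup (Fin 2) ℝ) : Matrix (Fin 2) (Fin 2) ℝ)} with hT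
  have hTbdd : BddAbove T := by
    have : T = (fun s : SL2Z => opNorm ((g * Matrix.SpecialLinearGroup.map (Int.castRingHom ℝ) s * g⁻¹ :
        Matrix.SpecialLinearGroup (Fin 2) ℝ) : Matrix (Fin 2) (Fin 2) ℝ)) '' S := by
      ext z
      simp [hT, Set.mem_image, eq_comm]
    rw [this]
    exact (hSfin.image _).bddAbove
  -- the key inequality 1 ≤ sSup T * α^2
  have hM1 : 1 ≤ sSup T * α ^ 2 := by
    by_contra hlt
    push_neg at hlt
    apply hns
    have hSstab : ∀ s ∈ S, ∃ c : ℝ, (Mof s).mulVec uR = c • uR := by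
      intro s hs
      set ws : Fin 2 → ℤ := (s : Matrix (Fin 2) (Fin 2) ℤ).mulVec u with hws
      have h1 : (Mof s).mulVec uR = castVec ws := by
        rw [Mof_coe, huRdef, castVec_mulVec]
      set Conj : Matrix (Fin 2) (Fin 2) ℝ :=
        ((g * Matrix.SpecialLinearGroup.map (Int.castRingHom ℝ) s * g⁻¹ :
          Matrix.SpecialLinearGroup (Fin 2) ℝ) : Matrix (Fin 2) (Fin 2) ℝ) with hConj
      have hConjcoe : Conj = G * Mof s * Ginv := by
        rw [hConj, Matrix.SpecialLinearGroup.coe_mul, Matrix.SpecialLinearGroup.coe_mul]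
        rfl
      have hConjM : opNorm Conj ≤ sSup T := le_csSup hTbdd ⟨s, hs, rfl⟩
      have hGws : G.mulVec (castVec ws) = Conj.mulVec v := by
        rw [← h1, Matrix.mulVec_mulVec, hConjcoe, hvdef, Matrix.mulVec_mulVec]
        congr 1
        rw [mul_assoc, hGinvG, mul_one]
      have hnormws : ‖ev (G.mulVec (castVec ws))‖ ≤ sSup T * α := by
        rw [hGws]
        calc ‖ev (Conj.mulVec v)‖ ≤ opNorm Conj * ‖ev v‖ := mulVec_norm_le _ _
          _ ≤ sSup T * α := by
              rw [← hαdef]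
              exact mul_le_mul_of_nonneg_right hConjM (le_of_lt hα)
      have hcrossint : |((u 0 * ws 1 - u 1 * ws 0 : ℤ) : ℝ)| < 1 := by
        have hc : cross v (G.mulVec (castVec ws)) = ((u 0 * ws 1 - u 1 * ws 0 : ℤ) : ℝ) := by
          rw [hvdef, cross_mulVec, hGdet, one_mul, huRdef, castVec_cross]
        have hb := abs_cross_le v (G.mulVec (castVec ws))
        rw [hc] at hb
        have : ‖ev v‖ * ‖ev (G.mulVec (castVec ws))‖ ≤ α * (sSup T * α) := by
          rw [← hαdef]
          exact mul_le_mul_of_nonneg_left hnormws (le_of_lt hα)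
        have heq : α * (sSup T * α) = sSup T * α ^ 2 := by ring
        rw [heq] at this
        linarith
      have hz : u 0 * ws 1 - u 1 * ws 0 = 0 := by
        have := hcrossint
        rw [← Int.cast_abs] at this
        have h2 : |u 0 * ws 1 - u 1 * ws 0| < 1 := by exact_mod_cast this
        have h4 := abs_lt.mp h2
        omega
      have hcross0 : cross uR (castVec ws) = 0 := by
        rw [huRdef, castVec_cross, hz]
        norm_num
      obtain ⟨c, hc⟩ := exists_smul_of_cross_eq_zero huR hcross0
      exact ⟨c, by rw [h1, hc]⟩
    haveI : Group.IsSolvable (Subgroup.closure S) := stab_solvable uR huR S hSstab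
    exact ⟨⊤, inferInstance, show Group.IsSolvable _ from inferInstance⟩
  -- conclusion
  have hMα : 1 / α ^ 2 ≤ sSup T := by
    rw [div_le_iff₀ (by positivity)]
    linarith
  have hD2 : (⨅ γ' : SL2Z, opNorm ((g * Matrix.SpecialLinearGroup.map (Int.castRingHom ℝ) γ' :
      Matrix.SpecialLinearGroup (Fin 2) ℝ) : Matrix (Fin 2) (Fin 2) ℝ)) ^ (2:ℝ) ≤ 9 / α ^ 2 := by
    rw [Real.rpow_two]
    calc (⨅ γ' : SL2Z, opNorm ((g * Matrix.SpecialLinearGroup.map (Int.castRingHom ℝ) γ' :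
          Matrix.SpecialLinearGroup (Fin 2) ℝ) : Matrix (Fin 2) (Fin 2) ℝ)) ^ 2
        ≤ (3 / α) ^ 2 := pow_le_pow_left₀ hD0 hDle 2
      _ = 9 / α ^ 2 := by rw [div_pow]; norm_num
  calc (1/9 : ℝ) * (⨅ γ' : SL2Z, opNorm ((g * Matrix.SpecialLinearGroup.map (Int.castRingHom ℝ) γ' :
        Matrix.SpecialLinearGroup (Fin 2) ℝ) : Matrix (Fin 2) (Fin 2) ℝ)) ^ (2:ℝ)
      ≤ (1/9 : ℝ) * (9 / α ^ 2) := by linarith [hD2]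
    _ = 1 / α ^ 2 := by field_simp
    _ ≤ sSup T := hMα
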